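/- Let f : [0,1]^d → ℝ have the form f(x) = f(0) + λ·ν([0,x]) where λ ≥ 0 and ν is a probability measure on [0,1]^d that is absolutely continuous with respect to Lebesgue measure. If x_1, …, x_n ∈ [0,1]^d have nonpositive local discrepancy, then (1/n)·Σ_{i=1}^{n} f(1 − x_i) ≤ ∫_{[0,1]^d} f(x) dx. -/

import Mathlib

open MeasureTheory Finset

open scoped ENNReal

/-- If `f(x) = f(0) + λ·ν([0,x])` for a probability measure `ν` on `[0,1]^d` that is
absolutely continuous with respect to Lebesgue measure and `λ ≥ 0`, and the points
`x i` have nonpositive local discrepancy, then the QMC average of `f` over the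
reflected points `1 - x i` is a lower bound for the integral of `f` over `[0,1]^d`. -/
theorem npld_lower_bound_complete_monotone (d n : ℕ) (hn : 1 ≤ n)
    (f : (Fin d → ℝ) → ℝ) (l : ℝ) (hl : 0 ≤ l)
    (ν : Measure (Fin d → ℝ)) [IsProbabilityMeasure ν]
    (hνcube : ν (Set.Icc (0 : Fin d → ℝ) 1) = 1)
    (hνac : ν ≪ volume)
    (hf : ∀ x ∈ Set.Icc (0 : Fin d → ℝ) 1,
      f x = f 0 + l * (ν (Set.Icc (0 : Fin d → ℝ) x)).toReal)
    (x : Fin n → Fin d → ℝ) (hx : ∀ i j, x i j ∈ Set.Icc (0 : ℝ) 1)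
    (hNPLD : ∀ a : Fin d → ℝ, (∀ j, a j ∈ Set.Icc (0 : ℝ) 1) →
      ((Finset.univ.filter fun i => ∀ j, x i j < a j).card : ℝ) / n ≤ ∏ j, a j) :
    (1 / (n : ℝ)) * ∑ i, f (fun j => 1 - x i j) ≤
      ∫ y in Set.Icc (0 : Fin d → ℝ) 1, f y ∂volume := by
  classical
  set C : Set (Fin d → ℝ) := Set.Icc (0 : Fin d → ℝ) 1 with hCdef
  have hCmeas : MeasurableSet C := measurableSet_Icc
  have hvolC : (volume : Measure (Fin d → ℝ)) C = 1 := by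
    rw [hCdef, ← Set.pi_univ_Icc, volume_pi_pi]
    simp
  set X : Fin n → Fin d → ℝ := fun i j => 1 - x i j with hXdef
  have hXC : ∀ i, X i ∈ C := by
    intro i
    rw [hCdef, Set.mem_Icc]
    constructor <;> intro j <;>
      simp only [hXdef, Pi.zero_apply, Pi.one_apply] <;>
      have := hx i j <;> rw [Set.mem_Icc] at this <;> simp <;> linarith [this.1, this.2]
  -- measurable product sets
  have hle_meas : MeasurableSet {p : (Fin d → ℝ) × (Fin d → ℝ) | p.1 ≤ p.2} := by
    have : {p : (Fin d → ℝ) × (Fin d → ℝ) | p.1 ≤ p.2} =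
        ⋂ j, {p : (Fin d → ℝ) × (Fin d → ℝ) | p.1 j ≤ p.2 j} := by
      ext p; simp [Pi.le_def]
    rw [this]
    exact MeasurableSet.iInter fun j =>
      measurableSet_le (by fun_prop) (by fun_prop)
  set s : Set ((Fin d → ℝ) × (Fin d → ℝ)) := {p | p.1 ≤ p.2 ∧ p.2 ∈ C} with hsdef
  have hsmeas : MeasurableSet s := hle_meas.inter (measurable_snd hCmeas)
  -- g y = ν [0, y]
  set g : (Fin d → ℝ) → ℝ≥0∞ := fun y => ν (Set.Icc 0 y) with hgdef
  have hgmeas : Measurable g := by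
    have hs' : MeasurableSet {p : (Fin d → ℝ) × (Fin d → ℝ) | 0 ≤ p.1 ∧ p.1 ≤ p.2} := by
      have heq : {p : (Fin d → ℝ) × (Fin d → ℝ) | 0 ≤ p.1 ∧ p.1 ≤ p.2} =
          (⋂ j, {p : (Fin d → ℝ) × (Fin d → ℝ) | (0:ℝ) ≤ p.1 j}) ∩
            {p : (Fin d → ℝ) × (Fin d → ℝ) | p.1 ≤ p.2} := by
        ext p; simp [Pi.le_def]
      rw [heq]
      exact (MeasurableSet.iInter fun j =>
        measurableSet_le measurable_const (by fun_prop)).inter hle_meas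
    have h := measurable_measure_prodMk_right (μ := ν) hs'
    have heq2 : g = fun y => ν ((fun a => (a, y)) ⁻¹' {p : (Fin d → ℝ) × (Fin d → ℝ) | 0 ≤ p.1 ∧ p.1 ≤ p.2}) := by
      funext y
      have hpre : Set.Icc (0 : Fin d → ℝ) y =
          (fun a => (a, y)) ⁻¹' {p : (Fin d → ℝ) × (Fin d → ℝ) | 0 ≤ p.1 ∧ p.1 ≤ p.2} := by
        ext a; simp [Set.mem_Icc]
      rw [hgdef]
      simp only [hpre]
    rw [heq2]
    exact h
  have hνCc : ν Cᶜ = 0 := by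
    rw [measure_compl hCmeas (measure_ne_top _ _), hνcube, measure_univ, tsub_self]
  -- Claim 1 : sections of s
  have claim1 : ∀ y, ν {a | (a, y) ∈ s} = C.indicator g y := by
    intro y
    by_cases hy : y ∈ C
    · rw [Set.indicator_of_mem hy]
      have hset : {a | (a, y) ∈ s} = {a | a ≤ y} := by
        ext a; simp [hsdef, hy]
      rw [hset]
      apply le_antisymm
      · calc ν {a | a ≤ y} ≤ ν (Set.Icc 0 y ∪ Cᶜ) := by
              apply measure_mono
              intro a ha
              by_cases haC : a ∈ C
              · exact Or.inl ⟨haC.1, ha⟩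
              · exact Or.inr haC
          _ ≤ ν (Set.Icc 0 y) + ν Cᶜ := measure_union_le _ _
          _ = g y := by rw [hνCc, add_zero]
      · exact measure_mono fun a ha => ha.2
    · rw [Set.indicator_of_notMem hy]
      have hset : {a | (a, y) ∈ s} = ∅ := by
        ext a; simp [hsdef, hy]
      rw [hset, measure_empty]
  set I : ℝ≥0∞ := ∫⁻ y in C, g y ∂volume with hIdef
  have hIprod : I = ∫⁻ a, volume (Prod.mk a ⁻¹' s) ∂ν := by
    rw [hIdef, ← lintegral_indicator hCmeas]
    simp_rw [← claim1]
    rw [show (fun y => ν {a | (a, y) ∈ s}) = fun y => ν ((fun a => (a, y)) ⁻¹' s) from rfl,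
      ← Measure.prod_apply_symm (μ := ν) (ν := volume) hsmeas,
      Measure.prod_apply hsmeas]
  have hIone : I ≤ 1 := by
    calc I ≤ ∫⁻ _ in C, 1 ∂volume := by
          apply lintegral_mono
          intro y
          exact prob_le_one
      _ = 1 := by rw [setLIntegral_one, hvolC]
  -- a.e. good points
  have hae : ∀ᵐ a ∂ν, a ∈ C ∧ ∀ i j, a j ≠ 1 - x i j := by
    have h1 : ∀ᵐ a ∂ν, a ∈ C := by
      rw [ae_iff]
      convert hνCc using 2
      rfl
    have h2 : ∀ᵐ a ∂ν, ∀ i j, a j ≠ 1 - x i j := by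
      rw [ae_all_iff]
      intro i
      rw [ae_all_iff]
      intro j
      have hv : (volume : Measure (Fin d → ℝ)) {a : Fin d → ℝ | a j = 1 - x i j} = 0 := by
        rw [MeasureTheory.volume_pi]
        exact Measure.pi_hyperplane (fun _ => (volume : Measure ℝ)) j (1 - x i j)
      rw [ae_iff]
      refine measure_mono_null (fun a ha => ?_) (hνac hv)
      exact not_not.mp ha
    exact h1.and h2
  -- the key inequality
  have key : ∑ i, ν (Set.Icc 0 (X i)) ≤ (n : ℝ≥0∞) * I := by
    have hind : ∀ i : Fin n, Measurable fun a => (Set.Icc 0 (X i)).indicator (1 : (Fin d → ℝ) → ℝ≥0∞) a :=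
      fun i => measurable_one.indicator measurableSet_Icc
    calc ∑ i, ν (Set.Icc 0 (X i))
        = ∑ i : Fin n, ∫⁻ a, (Set.Icc 0 (X i)).indicator 1 a ∂ν := by
          refine Finset.sum_congr rfl fun i _ => ?_
          rw [lintegral_indicator_one measurableSet_Icc]
      _ = ∫⁻ a, ∑ i : Fin n, (Set.Icc 0 (X i)).indicator 1 a ∂ν :=
          (lintegral_finset_sum _ fun i _ => hind i).symm
      _ ≤ ∫⁻ a, (n : ℝ≥0∞) * volume (Prod.mk a ⁻¹' s) ∂ν := by
          apply lintegral_mono_ae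
          filter_upwards [hae] with a ha
          obtain ⟨haC, hane⟩ := ha
          have ha0 : (0 : Fin d → ℝ) ≤ a := haC.1
          have ha1 : a ≤ 1 := haC.2
          -- compute the section volume
          have hsec : Prod.mk a ⁻¹' s = Set.Icc a 1 := by
            ext y
            simp only [hsdef, Set.mem_preimage, Set.mem_setOf_eq, Set.mem_Icc, hCdef]
            constructor
            · rintro ⟨h1, _, h2⟩; exact ⟨h1, h2⟩
            · rintro ⟨h1, h2⟩; exact ⟨h1, le_trans ha0 h1, h2⟩
          have hvol : volume (Prod.mk a ⁻¹' s) = ∏ j, ENNReal.ofReal (1 - a j) := by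
            rw [hsec, ← Set.pi_univ_Icc, volume_pi_pi]
            simp [Real.volume_Icc]
          rw [hvol]
          -- compute the indicator sum
          have hset_eq : ∀ i : Fin n, a ∈ Set.Icc 0 (X i) ↔ ∀ j, x i j < 1 - a j := by
            intro i
            rw [Set.mem_Icc]
            constructor
            · rintro ⟨-, h2⟩ j
              have h2j := h2 j
              simp only [hXdef] at h2j
              have hne := hane i j
              rcases lt_or_eq_of_le h2j with h | h
              · linarith
              · exact absurd h hne
            · intro h
              refine ⟨ha0, fun j => ?_⟩
              have := h j
              simp only [hXdef]
              linarith
          have hsum_eq : ∑ i : Fin n, (Set.Icc 0 (X i)).indicator (1 : (Fin d → ℝ) → ℝ≥0∞) a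
              = ((Finset.univ.filter fun i => ∀ j, x i j < 1 - a j).card : ℝ≥0∞) := by
            rw [← Finset.sum_boole]
            refine Finset.sum_congr rfl fun i _ => ?_
            by_cases hmem : a ∈ Set.Icc 0 (X i)
            · simp [Set.indicator_of_mem hmem, (hset_eq i).mp hmem]
            · rw [Set.indicator_of_notMem hmem, if_neg (fun h => hmem ((hset_eq i).mpr h))]
          rw [hsum_eq]
          -- apply NPLD
          have hb : ∀ j, (1 - a j) ∈ Set.Icc (0:ℝ) 1 := by
            intro j
            have h0 : (0:ℝ) ≤ a j := ha0 j
            have h1 : a j ≤ 1 := ha1 j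
            rw [Set.mem_Icc]; constructor <;> linarith
          have hnpld := hNPLD (fun j => 1 - a j) hb
          have hnpos : (0:ℝ) < n := by exact_mod_cast hn
          rw [div_le_iff₀ hnpos] at hnpld
          have hreal : ((Finset.univ.filter fun i => ∀ j, x i j < 1 - a j).card : ℝ)
              ≤ (∏ j, (1 - a j)) * n := hnpld
          calc ((Finset.univ.filter fun i => ∀ j, x i j < 1 - a j).card : ℝ≥0∞)
              = ENNReal.ofReal ((Finset.univ.filter fun i => ∀ j, x i j < 1 - a j).card : ℝ) := by
                rw [ENNReal.ofReal_natCast]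
            _ ≤ ENNReal.ofReal ((∏ j, (1 - a j)) * n) := ENNReal.ofReal_le_ofReal hreal
            _ = (n : ℝ≥0∞) * ∏ j, ENNReal.ofReal (1 - a j) := by
                rw [ENNReal.ofReal_mul' (by positivity),
                  ENNReal.ofReal_prod_of_nonneg (fun j _ => by have := hb j; rw [Set.mem_Icc] at this; exact this.1),
                  ENNReal.ofReal_natCast, mul_comm]
      _ = (n : ℝ≥0∞) * I := by
          rw [lintegral_const_mul _ (measurable_measure_prodMk_left hsmeas), hIprod]
  -- convert to reals
  have hnpos : (0:ℝ) < n := by exact_mod_cast hn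
  have hIne : I ≠ ⊤ := (lt_of_le_of_lt hIone ENNReal.one_lt_top).ne
  have hSfin : ∀ i ∈ Finset.univ, ν (Set.Icc 0 (X i)) ≠ ⊤ := fun i _ => measure_ne_top _ _
  have hSle : (∑ i, ν (Set.Icc 0 (X i))).toReal ≤ n * I.toReal := by
    have : ((n : ℝ≥0∞) * I).toReal = n * I.toReal := by
      rw [ENNReal.toReal_mul, ENNReal.toReal_natCast]
    rw [← this]
    exact ENNReal.toReal_mono (ENNReal.mul_ne_top (ENNReal.natCast_ne_top n) hIne) key
  -- LHS rewrite
  have hLHS : ∑ i, f (fun j => 1 - x i j)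
      = n * f 0 + l * ∑ i, (ν (Set.Icc 0 (X i))).toReal := by
    have heach : ∀ i : Fin n, f (fun j => 1 - x i j) = f 0 + l * (ν (Set.Icc 0 (X i))).toReal :=
      fun i => hf _ (hXC i)
    rw [Finset.sum_congr rfl fun i _ => heach i, Finset.sum_add_distrib,
      Finset.sum_const, Finset.card_univ, Fintype.card_fin, ← Finset.mul_sum]
    simp [nsmul_eq_mul]
  have hsum_toReal : ∑ i, (ν (Set.Icc 0 (X i))).toReal = (∑ i, ν (Set.Icc 0 (X i))).toReal :=
    (ENNReal.toReal_sum hSfin).symm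
  -- RHS rewrite
  haveI hfin : IsFiniteMeasure ((volume : Measure (Fin d → ℝ)).restrict C) := by
    constructor
    rw [Measure.restrict_apply_univ, hvolC]
    exact ENNReal.one_lt_top
  have hInt2 : Integrable (fun y => l * (g y).toReal)
      ((volume : Measure (Fin d → ℝ)).restrict C) := by
    apply Integrable.const_mul
    refine ⟨(hgmeas.ennreal_toReal).aestronglyMeasurable, ?_⟩
    apply HasFiniteIntegral.mono' (g := fun _ => (1:ℝ)) (integrable_const (1:ℝ)).2
    filter_upwards with y
    rw [Real.norm_eq_abs, abs_of_nonneg ENNReal.toReal_nonneg]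
    exact ENNReal.toReal_le_of_le_ofReal zero_le_one (by simpa using (prob_le_one (μ := ν) (s := Set.Icc 0 y)))
  have hRHS : ∫ y in C, f y ∂volume = f 0 + l * I.toReal := by
    rw [setIntegral_congr_fun hCmeas (fun y hy => hf y hy)]
    rw [integral_add (integrable_const _) hInt2]
    rw [setIntegral_const, measureReal_def, hvolC, ENNReal.toReal_one, one_smul]
    congr 1
    rw [integral_const_mul]
    congr 1
    rw [hIdef]
    exact integral_toReal (hgmeas.aemeasurable.restrict)
      (Filter.Eventually.of_forall fun y => measure_lt_top ν _)
  -- finish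
  rw [hLHS, hsum_toReal, hRHS]
  have hmain : (1 / (n:ℝ)) * (n * f 0 + l * (∑ i, ν (Set.Icc 0 (X i))).toReal)
      = f 0 + l * ((∑ i, ν (Set.Icc 0 (X i))).toReal / n) := by
    field_simp
  rw [hmain]
  have hstep : (∑ i, ν (Set.Icc 0 (X i))).toReal / n ≤ I.toReal := by
    rw [div_le_iff₀ hnpos]
    linarith [hSle]
  have := mul_le_mul_of_nonneg_left hstep hl
  linarith
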